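/- arXiv:0805.1277 — 3 statements merged into one kernel-verified Lean document; each statement's English description precedes it below -/
import Mathlib

section
/- Let (a_n), (b_n) be sequences in a field with b_0 = 1 and a_n ≠ 0 for all n, and let A be the lower triangular matrix with A(n,k) = a_n·b_{n-k}·a_k^{-1}. Then for any integer j ≥ 1, the j-th matrix power A^j has entries (A^j)(n,k) = a_n·C_{n-k}·a_k^{-1}, where C_0 = 1 and C_n = Σ_{i_1+⋯+i_j = n, each i_t ≥ 0} b_{i_1}·b_{i_2}·⋯·b_{i_j}, and consequently A^j is an SDR-matrix of order m for every m ≥ 3. -/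
/-- `A` is an SDR-matrix of order `m`: the generalized Star of David rule holds for
all `2 ≤ p ≤ m-1` and `0 ≤ r ≤ p-1`. -/
def IsSDR {F : Type*} [Field F] (m : ℕ) (A : ℕ → ℕ → F) : Prop :=
  ∀ n k p r : ℕ, 2 ≤ p → p ≤ m - 1 → r ≤ p - 1 →
    (∏ i ∈ Finset.range (r+1), A (n+i) (k+r-i)) *
      (∏ i ∈ Finset.range (p-r), A (n+p-i) (k+r+i+1)) =
    (∏ i ∈ Finset.range (r+1), A (n+p-i) (k+p-r+i)) *
      (∏ i ∈ Finset.range (p-r), A (n+i) (k+p-r-i-1))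

/-- Product of infinite lower triangular matrices. -/
def matMul {F : Type*} [Field F] (X Y : ℕ → ℕ → F) : ℕ → ℕ → F :=
  fun n k => ∑ j ∈ Finset.Icc k n, X n j * Y j k

/-- Matrix power of an infinite lower triangular matrix, `A^0` being the identity. -/
def matPow {F : Type*} [Field F] (A : ℕ → ℕ → F) : ℕ → (ℕ → ℕ → F)
  | 0 => fun n k => if n = k then 1 else 0
  | j + 1 => matMul A (matPow A j)

section Aux

variable {F : Type*} [Field F]

/-- convolution powers of b -/
noncomputable def Dfun (b : ℕ → F) (j n : ℕ) : F :=
  ∑ f ∈ Finset.Nat.antidiagonalTuple j n, ∏ t, b (f t)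

lemma Dfun_one (b : ℕ → F) (m : ℕ) : Dfun b 1 m = b m := by
  simp [Dfun, Finset.Nat.antidiagonalTuple_one]

lemma Dfun_succ (b : ℕ → F) (j m : ℕ) :
    Dfun b (j+1) m = ∑ x ∈ Finset.HasAntidiagonal.antidiagonal m, b x.1 * Dfun b j x.2 := by
  unfold Dfun
  simp_rw [Finset.mul_sum]
  rw [Finset.sum_sigma']
  refine (Finset.sum_nbij' (fun y => Fin.cons y.1.1 y.2)
    (fun f => ⟨(f 0, ∑ t : Fin j, f t.succ), Fin.tail f⟩) ?_ ?_ ?_ ?_ ?_).symm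
  · rintro ⟨⟨x1, x2⟩, g⟩ hy
    simp only [Finset.mem_sigma, Finset.HasAntidiagonal.mem_antidiagonal,
      Finset.Nat.mem_antidiagonalTuple] at hy ⊢
    rw [Fin.sum_cons, hy.2, hy.1]
  · intro f hf
    simp only [Finset.Nat.mem_antidiagonalTuple] at hf
    simp only [Finset.mem_sigma, Finset.HasAntidiagonal.mem_antidiagonal, Finset.Nat.mem_antidiagonalTuple]
    refine ⟨?_, ?_⟩
    · rw [← hf, Fin.sum_univ_succ]
    · simp [Fin.tail]
  · rintro ⟨⟨x1, x2⟩, g⟩ hy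
    simp only [Finset.mem_sigma, Finset.HasAntidiagonal.mem_antidiagonal,
      Finset.Nat.mem_antidiagonalTuple] at hy
    refine Sigma.ext ?_ (heq_of_eq ?_)
    · simp only [Fin.cons_zero]
      ext <;> simp [Fin.sum_univ_succ, Fin.tail, hy.2]
    · simp [Fin.tail]
  · intro f hf
    exact Fin.cons_self_tail f
  · rintro ⟨⟨x1, x2⟩, g⟩ hy
    simp [Fin.prod_univ_succ]

lemma matPow_triangular (A : ℕ → ℕ → F) (j n k : ℕ) (h : n < k) :
    matPow A j n k = 0 := by
  cases j with
  | zero => simp [matPow, Nat.ne_of_lt h]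
  | succ j =>
    simp [matPow, matMul, Finset.Icc_eq_empty_of_lt h]

lemma matPow_entries (a b : ℕ → F) (ha : ∀ n, a n ≠ 0)
    (A : ℕ → ℕ → F)
    (hA : ∀ n k, A n k = if k ≤ n then a n * b (n-k) * (a k)⁻¹ else 0) :
    ∀ j, 1 ≤ j → ∀ n k, k ≤ n → matPow A j n k = a n * Dfun b j (n-k) * (a k)⁻¹ := by
  intro j hj
  induction j, hj using Nat.le_induction with
  | base =>
    intro n k hkn
    simp only [matPow, matMul, mul_ite, mul_one, mul_zero]
    rw [Finset.sum_ite_eq' (Finset.Icc k n) k (fun l => A n l),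
      if_pos (Finset.mem_Icc.mpr ⟨le_refl k, hkn⟩), hA, if_pos hkn, Dfun_one]
  | succ j hj ih =>
    intro n k hkn
    show matMul A (matPow A j) n k = _
    unfold matMul
    have step : ∀ l ∈ Finset.Icc k n,
        A n l * matPow A j l k = a n * (b (n-l) * Dfun b j (l-k)) * (a k)⁻¹ := by
      intro l hl
      rw [Finset.mem_Icc] at hl
      rw [hA, if_pos hl.2, ih l k hl.1]
      calc (a n * b (n-l) * (a l)⁻¹) * (a l * Dfun b j (l-k) * (a k)⁻¹)
          = a n * (b (n-l) * Dfun b j (l-k)) * (a k)⁻¹ * ((a l)⁻¹ * a l) := by ring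
        _ = a n * (b (n-l) * Dfun b j (l-k)) * (a k)⁻¹ := by
            rw [inv_mul_cancel₀ (ha l), mul_one]
    rw [Finset.sum_congr rfl step, ← Finset.sum_mul, ← Finset.mul_sum]
    congr 2
    rw [Dfun_succ, Finset.Nat.sum_antidiagonal_eq_sum_range_succ_mk]
    refine Finset.sum_nbij' (fun l => n - l) (fun i => n - i) ?_ ?_ ?_ ?_ ?_
    · intro l hl
      rw [Finset.mem_Icc] at hl
      simp only [Finset.mem_range]; omega
    · intro i hi
      rw [Finset.mem_range] at hi
      simp only [Finset.mem_Icc]; omega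
    · intro l hl; rw [Finset.mem_Icc] at hl; omega
    · intro i hi; rw [Finset.mem_range] at hi; omega
    · intro l hl
      rw [Finset.mem_Icc] at hl
      simp only []
      rw [show n - k - (n - l) = l - k by omega]

lemma prod_split (f : ℕ → F) (p r : ℕ) (h : r < p) :
    (∏ i ∈ Finset.range (r+1), f i) * (∏ i ∈ Finset.range (p-r), f (r+1+i)) =
      ∏ i ∈ Finset.range (p+1), f i := by
  rw [show p + 1 = (r+1) + (p-r) by omega, Finset.prod_range_add f (r+1) (p-r)]

lemma sdr_of_shift (a : ℕ → F) (g : ℤ → F) (M : ℕ → ℕ → F)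
    (hM : ∀ n k, M n k = a n * g ((n : ℤ) - (k : ℤ)) * (a k)⁻¹) (m : ℕ) :
    IsSDR m M := by
  intro n k p r hp _ hr
  have hrp : r < p := by omega
  simp only [hM, Finset.prod_mul_distrib]
  have hG1 : (∏ i ∈ Finset.range (r+1), g ((↑(n+i) : ℤ) - ↑(k+r-i))) =
      ∏ i ∈ Finset.range (r+1), g ((↑(n+p-i) : ℤ) - ↑(k+p-r+i)) := by
    rw [← Finset.prod_range_reflect (fun i => g ((↑(n+p-i) : ℤ) - ↑(k+p-r+i))) (r+1)]
    refine Finset.prod_congr rfl fun i hi => ?_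
    rw [Finset.mem_range] at hi
    congr 1
    omega
  have hG2 : (∏ i ∈ Finset.range (p-r), g ((↑(n+p-i) : ℤ) - ↑(k+r+i+1))) =
      ∏ i ∈ Finset.range (p-r), g ((↑(n+i) : ℤ) - ↑(k+p-r-i-1)) := by
    rw [← Finset.prod_range_reflect (fun i => g ((↑(n+i) : ℤ) - ↑(k+p-r-i-1))) (p-r)]
    refine Finset.prod_congr rfl fun i hi => ?_
    rw [Finset.mem_range] at hi
    congr 1
    omega
  have hR : (∏ i ∈ Finset.range (r+1), a (n+i)) * (∏ i ∈ Finset.range (p-r), a (n+p-i)) =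
      (∏ i ∈ Finset.range (r+1), a (n+p-i)) * (∏ i ∈ Finset.range (p-r), a (n+i)) := by
    have e1 : (∏ i ∈ Finset.range (p-r), a (n+p-i)) =
        ∏ i ∈ Finset.range (p-r), a (n + (r+1+i)) := by
      rw [← Finset.prod_range_reflect (fun i => a (n + (r+1+i))) (p-r)]
      refine Finset.prod_congr rfl fun i hi => ?_
      rw [Finset.mem_range] at hi
      congr 1 <;> omega
    have e2 : (∏ i ∈ Finset.range (r+1), a (n+p-i)) =
        ∏ i ∈ Finset.range (r+1), a (n + ((p-r)+i)) := by
      rw [← Finset.prod_range_reflect (fun i => a (n + ((p-r)+i))) (r+1)]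
      refine Finset.prod_congr rfl fun i hi => ?_
      rw [Finset.mem_range] at hi
      congr 1 <;> omega
    calc (∏ i ∈ Finset.range (r+1), a (n+i)) * (∏ i ∈ Finset.range (p-r), a (n+p-i))
        = (∏ i ∈ Finset.range (r+1), a (n+i)) *
            (∏ i ∈ Finset.range (p-r), a (n + (r+1+i))) := by rw [e1]
      _ = ∏ i ∈ Finset.range ((r+1)+(p-r)), a (n+i) :=
          (Finset.prod_range_add (fun i => a (n+i)) (r+1) (p-r)).symm
      _ = ∏ i ∈ Finset.range ((p-r)+(r+1)), a (n+i) := by rw [Nat.add_comm]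
      _ = (∏ i ∈ Finset.range (p-r), a (n+i)) *
            (∏ i ∈ Finset.range (r+1), a (n + ((p-r)+i))) :=
          Finset.prod_range_add (fun i => a (n+i)) (p-r) (r+1)
      _ = (∏ i ∈ Finset.range (r+1), a (n+p-i)) * (∏ i ∈ Finset.range (p-r), a (n+i)) := by
          rw [← e2, mul_comm]
  have hC : (∏ i ∈ Finset.range (r+1), (a (k+r-i))⁻¹) *
        (∏ i ∈ Finset.range (p-r), (a (k+r+i+1))⁻¹) =
      (∏ i ∈ Finset.range (r+1), (a (k+p-r+i))⁻¹) *
        (∏ i ∈ Finset.range (p-r), (a (k+p-r-i-1))⁻¹) := by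
    have e1 : (∏ i ∈ Finset.range (r+1), (a (k+r-i))⁻¹) =
        ∏ i ∈ Finset.range (r+1), (a (k+i))⁻¹ := by
      rw [← Finset.prod_range_reflect (fun i => (a (k+i))⁻¹) (r+1)]
      refine Finset.prod_congr rfl fun i hi => ?_
      rw [Finset.mem_range] at hi
      congr 2 <;> omega
    have e2 : (∏ i ∈ Finset.range (p-r), (a (k+p-r-i-1))⁻¹) =
        ∏ i ∈ Finset.range (p-r), (a (k+i))⁻¹ := by
      rw [← Finset.prod_range_reflect (fun i => (a (k+i))⁻¹) (p-r)]
      refine Finset.prod_congr rfl fun i hi => ?_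
      rw [Finset.mem_range] at hi
      congr 2 <;> omega
    have e3 : (∏ i ∈ Finset.range (p-r), (a (k+r+i+1))⁻¹) =
        ∏ i ∈ Finset.range (p-r), (a (k+(r+1+i)))⁻¹ := by
      refine Finset.prod_congr rfl fun i hi => ?_
      congr 2 <;> omega
    have e4 : (∏ i ∈ Finset.range (r+1), (a (k+p-r+i))⁻¹) =
        ∏ i ∈ Finset.range (r+1), (a (k+((p-r)+i)))⁻¹ := by
      refine Finset.prod_congr rfl fun i hi => ?_
      congr 2 <;> omega
    calc (∏ i ∈ Finset.range (r+1), (a (k+r-i))⁻¹) *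
          (∏ i ∈ Finset.range (p-r), (a (k+r+i+1))⁻¹)
        = (∏ i ∈ Finset.range (r+1), (a (k+i))⁻¹) *
            (∏ i ∈ Finset.range (p-r), (a (k+(r+1+i)))⁻¹) := by rw [e1, e3]
      _ = ∏ i ∈ Finset.range ((r+1)+(p-r)), (a (k+i))⁻¹ :=
          (Finset.prod_range_add (fun i => (a (k+i))⁻¹) (r+1) (p-r)).symm
      _ = ∏ i ∈ Finset.range ((p-r)+(r+1)), (a (k+i))⁻¹ := by rw [Nat.add_comm]
      _ = (∏ i ∈ Finset.range (p-r), (a (k+i))⁻¹) *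
            (∏ i ∈ Finset.range (r+1), (a (k+((p-r)+i)))⁻¹) :=
          Finset.prod_range_add (fun i => (a (k+i))⁻¹) (p-r) (r+1)
      _ = (∏ i ∈ Finset.range (r+1), (a (k+p-r+i))⁻¹) *
            (∏ i ∈ Finset.range (p-r), (a (k+p-r-i-1))⁻¹) := by
          rw [← e2, ← e4, mul_comm]
  rw [hG1, hG2]
  calc (∏ i ∈ Finset.range (r+1), a (n+i)) *
        (∏ i ∈ Finset.range (r+1), g ((↑(n+p-i) : ℤ) - ↑(k+p-r+i))) *
        (∏ i ∈ Finset.range (r+1), (a (k+r-i))⁻¹) *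
        ((∏ i ∈ Finset.range (p-r), a (n+p-i)) *
          (∏ i ∈ Finset.range (p-r), g ((↑(n+i) : ℤ) - ↑(k+p-r-i-1))) *
          (∏ i ∈ Finset.range (p-r), (a (k+r+i+1))⁻¹))
      = ((∏ i ∈ Finset.range (r+1), a (n+i)) * (∏ i ∈ Finset.range (p-r), a (n+p-i))) *
        ((∏ i ∈ Finset.range (r+1), g ((↑(n+p-i) : ℤ) - ↑(k+p-r+i))) *
          (∏ i ∈ Finset.range (p-r), g ((↑(n+i) : ℤ) - ↑(k+p-r-i-1)))) *
        ((∏ i ∈ Finset.range (r+1), (a (k+r-i))⁻¹) *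
          (∏ i ∈ Finset.range (p-r), (a (k+r+i+1))⁻¹)) := by ring
    _ = ((∏ i ∈ Finset.range (r+1), a (n+p-i)) * (∏ i ∈ Finset.range (p-r), a (n+i))) *
        ((∏ i ∈ Finset.range (r+1), g ((↑(n+p-i) : ℤ) - ↑(k+p-r+i))) *
          (∏ i ∈ Finset.range (p-r), g ((↑(n+i) : ℤ) - ↑(k+p-r-i-1)))) *
        ((∏ i ∈ Finset.range (r+1), (a (k+p-r+i))⁻¹) *
          (∏ i ∈ Finset.range (p-r), (a (k+p-r-i-1))⁻¹)) := by rw [hR, hC]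
    _ = _ := by ring

end Aux

theorem matrix_power_entries_and_isSDR {F : Type*} [Field F]
    (a b : ℕ → F) (hb0 : b 0 = 1) (ha : ∀ n, a n ≠ 0)
    (A : ℕ → ℕ → F)
    (hA : ∀ n k, A n k = if k ≤ n then a n * b (n-k) * (a k)⁻¹ else 0)
    (j : ℕ) (hj : 1 ≤ j)
    (C : ℕ → F) (hC0 : C 0 = 1)
    (hC : ∀ n, 1 ≤ n → C n =
      ∑ f ∈ Finset.Nat.antidiagonalTuple j n, ∏ t, b (f t)) :
    (∀ n k, k ≤ n → matPow A j n k = a n * C (n-k) * (a k)⁻¹) ∧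
      ∀ m, 3 ≤ m → IsSDR m (matPow A j) := by
  have hCD : ∀ n, C n = Dfun b j n := by
    intro n
    cases n with
    | zero =>
      rw [hC0, Dfun, Finset.Nat.antidiagonalTuple_zero_right, Finset.sum_singleton]
      simp [hb0]
    | succ n => rw [hC (n+1) (by omega)]; rfl
  have hent : ∀ n k, k ≤ n → matPow A j n k = a n * C (n-k) * (a k)⁻¹ := by
    intro n k hkn
    rw [matPow_entries a b ha A hA j hj n k hkn, hCD]
  refine ⟨hent, fun m _ => ?_⟩
  refine sdr_of_shift a (fun z => if 0 ≤ z then C z.toNat else 0) _ (fun n k => ?_) m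
  by_cases h : k ≤ n
  · rw [hent n k h, if_pos (show (0:ℤ) ≤ (n:ℤ) - (k:ℤ) by omega),
      show ((n:ℤ) - (k:ℤ)).toNat = n - k by omega]
  · rw [matPow_triangular A j n k (by omega),
      if_neg (show ¬ (0:ℤ) ≤ (n:ℤ) - (k:ℤ) by omega), mul_zero, zero_mul]
end

section
/- Let A = (A(n,k))_{n ≥ k ≥ 0} be an infinite lower triangular matrix over a field with A(n,k) ≠ 0 for all n ≥ k ≥ 0. If A is an SDR-matrix of order m (m ≥ 3), then A is an SDR-matrix of order m+1; hence A is an SDR-matrix of order m' for all m' ≥ 3. -/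
open Finset

namespace SDRaux

variable {F : Type*} [Field F]

/-- The diagonal step ratio. -/
def Hq (A : ℕ → ℕ → F) (n k : ℕ) : F := A (n+1) (k+1) / A n k

variable {A : ℕ → ℕ → F}

lemma Hq_ne (hne : ∀ n k, k ≤ n → A n k ≠ 0) {n k : ℕ} (h : k ≤ n) : Hq A n k ≠ 0 :=
  div_ne_zero (hne _ _ (by omega)) (hne _ _ h)

lemma hexH (hne : ∀ n k, k ≤ n → A n k ≠ 0)
    (hex : ∀ n k : ℕ, A n k * (A (n+2) (k+1) * A (n+1) (k+2)) =
      A (n+2) (k+2) * (A n (k+1) * A (n+1) k))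
    {n k : ℕ} (h : k + 1 ≤ n) :
    Hq A n (k+1) * Hq A (n+1) k = Hq A n k * Hq A (n+1) (k+1) := by
  have h1 := hne n k (by omega)
  have h2 := hne (n+1) (k+1) (by omega)
  have h3 := hne n (k+1) h
  have h4 := hne (n+1) k (by omega)
  unfold Hq
  field_simp
  simp only [show n+1+1 = n+2 from rfl, show k+1+1 = k+2 from rfl]
  linear_combination hex n k

lemma C1 (hne : ∀ n k, k ≤ n → A n k ≠ 0)
    (hex : ∀ n k : ℕ, A n k * (A (n+2) (k+1) * A (n+1) (k+2)) =
      A (n+2) (k+2) * (A n (k+1) * A (n+1) k))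
    {n k : ℕ} (h : k + 1 ≤ n) :
    Hq A n (k+1) * Hq A (k+1) k = Hq A (k+1) (k+1) * Hq A n k := by
  induction n, h using Nat.le_induction with
  | base => ring
  | succ n hn ih =>
      have hstep := hexH hne hex (show k + 1 ≤ n from hn)
      have hnz : Hq A n k ≠ 0 := Hq_ne hne (by omega)
      apply mul_left_cancel₀ hnz
      linear_combination Hq A (n+1) k * ih - Hq A (k+1) k * hstep

/-- column correction factor -/
noncomputable def psi (A : ℕ → ℕ → F) (k : ℕ) : F :=
  ∏ j ∈ range k, (Hq A (j+1) (j+1) / Hq A (j+1) j)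

lemma lemB (hne : ∀ n k, k ≤ n → A n k ≠ 0)
    (hex : ∀ n k : ℕ, A n k * (A (n+2) (k+1) * A (n+1) (k+2)) =
      A (n+2) (k+2) * (A n (k+1) * A (n+1) k)) :
    ∀ k n, k ≤ n → Hq A n k = Hq A n 0 * psi A k := by
  intro k
  induction k with
  | zero => intro n _; simp [psi]
  | succ k ih =>
      intro n h
      have hc := C1 hne hex (show k + 1 ≤ n from h)
      have h1 : Hq A (k+1) k ≠ 0 := Hq_ne hne (by omega)
      have h2 := ih n (by omega)
      rw [psi, prod_range_succ, ← psi]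
      field_simp
      linear_combination hc + Hq A (k+1) (k+1) * h2

lemma tele (hne : ∀ n k, k ≤ n → A n k ≠ 0) :
    ∀ k m, A (m+k) k = A m 0 * ∏ t ∈ range k, Hq A (m+t) t := by
  intro k m
  induction k with
  | zero => simp
  | succ k ih =>
      rw [prod_range_succ, ← mul_assoc, ← ih]
      have hnz := hne (m+k) k (by omega)
      show A (m+(k+1)) (k+1) = _
      rw [Hq, show m+(k+1) = m+k+1 by omega, mul_div_cancel₀ _ hnz]

noncomputable def Phi (A : ℕ → ℕ → F) (n : ℕ) : F := ∏ t ∈ range n, Hq A t 0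
noncomputable def Psi (A : ℕ → ℕ → F) (k : ℕ) : F := ∏ t ∈ range k, psi A t

lemma Phi_ne (hne : ∀ n k, k ≤ n → A n k ≠ 0) (n : ℕ) : Phi A n ≠ 0 :=
  prod_ne_zero_iff.2 fun t _ => Hq_ne hne (by omega)

lemma struct_exists (hne : ∀ n k, k ≤ n → A n k ≠ 0)
    (hex : ∀ n k : ℕ, A n k * (A (n+2) (k+1) * A (n+1) (k+2)) =
      A (n+2) (k+2) * (A n (k+1) * A (n+1) k)) :
    ∃ f g h : ℕ → F, ∀ n k, k ≤ n → A n k = f (n-k) * g n * h k := by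
  refine ⟨fun d => A d 0 / Phi A d, Phi A, Psi A, fun n k hk => ?_⟩
  obtain ⟨m, rfl⟩ : ∃ m, n = m + k := ⟨n - k, by omega⟩
  have h0 : m + k - k = m := by omega
  rw [h0]
  have t1 : A (m+k) k = A m 0 * ∏ t ∈ range k, Hq A (m+t) t := tele hne k m
  have t2 : ∏ t ∈ range k, Hq A (m+t) t = (∏ t ∈ range k, Hq A (m+t) 0) * Psi A k := by
    rw [Psi, ← prod_mul_distrib]
    exact prod_congr rfl fun t _ => lemB hne hex t (m+t) (by omega)
  have t3 : Phi A (m+k) = Phi A m * ∏ t ∈ range k, Hq A (m+t) 0 := by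
    simp only [Phi, prod_range_add]
  have hPm := Phi_ne hne m
  rw [t1, t2, t3]
  field_simp

/-- canonical gluing of two ascending runs -/
lemma glue (u : ℕ → F) (c a b : ℕ) :
    (∏ i ∈ range a, u (c+i)) * (∏ i ∈ range b, u (c+a+i)) = ∏ i ∈ range (a+b), u (c+i) := by
  rw [prod_range_add]
  congr 1
  exact prod_congr rfl fun j _ => by rw [add_assoc]

lemma key (hAlt : ∀ n k, n < k → A n k = 0)
    (hne : ∀ n k, k ≤ n → A n k ≠ 0)
    (hex : ∀ n k : ℕ, A n k * (A (n+2) (k+1) * A (n+1) (k+2)) =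
      A (n+2) (k+2) * (A n (k+1) * A (n+1) k))
    (p r n k : ℕ) (hp : 2 ≤ p) (hr : r + 1 ≤ p) :
    (∏ i ∈ range (r+1), A (n+i) (k+r-i)) *
      (∏ i ∈ range (p-r), A (n+p-i) (k+r+i+1)) =
    (∏ i ∈ range (r+1), A (n+p-i) (k+p-r+i)) *
      (∏ i ∈ range (p-r), A (n+i) (k+p-r-i-1)) := by
  by_cases hd1 : n < k + r
  · have z1 : (∏ i ∈ range (r+1), A (n+i) (k+r-i)) = 0 :=
      prod_eq_zero (mem_range.2 (show 0 < r+1 by omega))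
        (by simpa using hAlt n (k+r) hd1)
    have z2 : (∏ i ∈ range (r+1), A (n+p-i) (k+p-r+i)) = 0 :=
      prod_eq_zero (mem_range.2 (show r < r+1 by omega))
        (by
          have : k + p - r + r = k + p := by omega
          rw [this]
          exact hAlt _ _ (by omega))
    rw [z1, z2, zero_mul, zero_mul]
  by_cases hd2 : n + r + 1 < k + p
  · have z1 : (∏ i ∈ range (p-r), A (n+p-i) (k+r+i+1)) = 0 :=
      prod_eq_zero (mem_range.2 (show p-r-1 < p-r by omega))
        (by
          have e1 : n + p - (p - r - 1) = n + r + 1 := by omega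
          have e2 : k + r + (p - r - 1) + 1 = k + p := by omega
          rw [e1, e2]
          exact hAlt _ _ (by omega))
    have z2 : (∏ i ∈ range (p-r), A (n+i) (k+p-r-i-1)) = 0 :=
      prod_eq_zero (mem_range.2 (show 0 < p-r by omega))
        (by
          have e1 : (n:ℕ) + 0 = n := by omega
          have e2 : k + p - r - 0 - 1 = k + p - r - 1 := by omega
          rw [e1, e2]
          exact hAlt _ _ (by omega))
    rw [z1, z2, mul_zero, mul_zero]
  -- nondegenerate case
  push_neg at hd1 hd2
  obtain ⟨f, g, h, hfgh⟩ := struct_exists hne hex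
  have e1 : (∏ i ∈ range (r+1), A (n+i) (k+r-i)) =
      (∏ i ∈ range (r+1), f ((n+i)-(k+r-i))) * (∏ i ∈ range (r+1), g (n+i)) *
        (∏ i ∈ range (r+1), h (k+r-i)) := by
    rw [← prod_mul_distrib, ← prod_mul_distrib]
    exact prod_congr rfl fun i hi => by
      simp only [mem_range] at hi
      exact hfgh _ _ (by omega)
  have e2 : (∏ i ∈ range (p-r), A (n+p-i) (k+r+i+1)) =
      (∏ i ∈ range (p-r), f ((n+p-i)-(k+r+i+1))) * (∏ i ∈ range (p-r), g (n+p-i)) *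
        (∏ i ∈ range (p-r), h (k+r+i+1)) := by
    rw [← prod_mul_distrib, ← prod_mul_distrib]
    exact prod_congr rfl fun i hi => by
      simp only [mem_range] at hi
      exact hfgh _ _ (by omega)
  have e3 : (∏ i ∈ range (r+1), A (n+p-i) (k+p-r+i)) =
      (∏ i ∈ range (r+1), f ((n+p-i)-(k+p-r+i))) * (∏ i ∈ range (r+1), g (n+p-i)) *
        (∏ i ∈ range (r+1), h (k+p-r+i)) := by
    rw [← prod_mul_distrib, ← prod_mul_distrib]
    exact prod_congr rfl fun i hi => by
      simp only [mem_range] at hi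
      exact hfgh _ _ (by omega)
  have e4 : (∏ i ∈ range (p-r), A (n+i) (k+p-r-i-1)) =
      (∏ i ∈ range (p-r), f ((n+i)-(k+p-r-i-1))) * (∏ i ∈ range (p-r), g (n+i)) *
        (∏ i ∈ range (p-r), h (k+p-r-i-1)) := by
    rw [← prod_mul_distrib, ← prod_mul_distrib]
    exact prod_congr rfl fun i hi => by
      simp only [mem_range] at hi
      exact hfgh _ _ (by omega)
  rw [e1, e2, e3, e4]
  -- f-parts
  have hF1 : (∏ i ∈ range (r+1), f ((n+p-i)-(k+p-r+i))) =
      ∏ i ∈ range (r+1), f ((n+i)-(k+r-i)) := by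
    conv_lhs => rw [← prod_range_reflect]
    exact prod_congr rfl fun j hj => by
      simp only [mem_range] at hj
      congr 1
      omega
  have hF2 : (∏ i ∈ range (p-r), f ((n+i)-(k+p-r-i-1))) =
      ∏ i ∈ range (p-r), f ((n+p-i)-(k+r+i+1)) := by
    conv_lhs => rw [← prod_range_reflect]
    exact prod_congr rfl fun j hj => by
      simp only [mem_range] at hj
      congr 1
      omega
  -- g-parts
  have hG1 : (∏ i ∈ range (r+1), g (n+i)) * (∏ i ∈ range (p-r), g (n+p-i)) =
      ∏ i ∈ range (p+1), g (n+i) := by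
    have hrefl : (∏ i ∈ range (p-r), g (n+p-i)) = ∏ i ∈ range (p-r), g (n+(r+1)+i) := by
      conv_lhs => rw [← prod_range_reflect]
      exact prod_congr rfl fun j hj => by
        simp only [mem_range] at hj
        congr 1
        omega
    rw [hrefl, glue, show r+1+(p-r) = p+1 by omega]
  have hG2 : (∏ i ∈ range (r+1), g (n+p-i)) * (∏ i ∈ range (p-r), g (n+i)) =
      ∏ i ∈ range (p+1), g (n+i) := by
    have hrefl : (∏ i ∈ range (r+1), g (n+p-i)) = ∏ i ∈ range (r+1), g (n+(p-r)+i) := by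
      conv_lhs => rw [← prod_range_reflect]
      exact prod_congr rfl fun j hj => by
        simp only [mem_range] at hj
        congr 1
        omega
    rw [hrefl, mul_comm, glue, show p-r+(r+1) = p+1 by omega]
  -- h-parts
  have hH1 : (∏ i ∈ range (r+1), h (k+r-i)) * (∏ i ∈ range (p-r), h (k+r+i+1)) =
      ∏ i ∈ range (p+1), h (k+i) := by
    have ha : (∏ i ∈ range (r+1), h (k+r-i)) = ∏ i ∈ range (r+1), h (k+i) := by
      conv_lhs => rw [← prod_range_reflect]
      exact prod_congr rfl fun j hj => by
        simp only [mem_range] at hj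
        congr 1
        omega
    have hb : (∏ i ∈ range (p-r), h (k+r+i+1)) = ∏ i ∈ range (p-r), h (k+(r+1)+i) := by
      exact prod_congr rfl fun j _ => by congr 1; omega
    rw [ha, hb, glue, show r+1+(p-r) = p+1 by omega]
  have hH2 : (∏ i ∈ range (r+1), h (k+p-r+i)) * (∏ i ∈ range (p-r), h (k+p-r-i-1)) =
      ∏ i ∈ range (p+1), h (k+i) := by
    have ha : (∏ i ∈ range (r+1), h (k+p-r+i)) = ∏ i ∈ range (r+1), h (k+(p-r)+i) := by
      exact prod_congr rfl fun j _ => by congr 1; omega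
    have hb : (∏ i ∈ range (p-r), h (k+p-r-i-1)) = ∏ i ∈ range (p-r), h (k+i) := by
      conv_lhs => rw [← prod_range_reflect]
      exact prod_congr rfl fun j hj => by
        simp only [mem_range] at hj
        congr 1
        omega
    rw [ha, hb, mul_comm, glue, show p-r+(r+1) = p+1 by omega]
  calc (∏ i ∈ range (r+1), f ((n+i)-(k+r-i))) * (∏ i ∈ range (r+1), g (n+i)) *
        (∏ i ∈ range (r+1), h (k+r-i)) *
      ((∏ i ∈ range (p-r), f ((n+p-i)-(k+r+i+1))) * (∏ i ∈ range (p-r), g (n+p-i)) *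
        (∏ i ∈ range (p-r), h (k+r+i+1)))
      = ((∏ i ∈ range (r+1), f ((n+i)-(k+r-i))) * (∏ i ∈ range (p-r), f ((n+p-i)-(k+r+i+1)))) *
        (((∏ i ∈ range (r+1), g (n+i)) * (∏ i ∈ range (p-r), g (n+p-i))) *
         ((∏ i ∈ range (r+1), h (k+r-i)) * (∏ i ∈ range (p-r), h (k+r+i+1)))) := by ring
    _ = ((∏ i ∈ range (r+1), f ((n+p-i)-(k+p-r+i))) * (∏ i ∈ range (p-r), f ((n+i)-(k+p-r-i-1)))) *
        (((∏ i ∈ range (r+1), g (n+p-i)) * (∏ i ∈ range (p-r), g (n+i))) *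
         ((∏ i ∈ range (r+1), h (k+p-r+i)) * (∏ i ∈ range (p-r), h (k+p-r-i-1)))) := by
          rw [hF1, hF2, hG1, hG2, hH1, hH2]
    _ = _ := by ring

end SDRaux

theorem isSDR_succ_of_isSDR {F : Type*} [Field F]
    (A : ℕ → ℕ → F) (hAlt : ∀ n k, n < k → A n k = 0)
    (hne : ∀ n k, k ≤ n → A n k ≠ 0)
    (m : ℕ) (hm : 3 ≤ m) (hA : IsSDR m A) :
    IsSDR (m+1) A ∧ ∀ m', 3 ≤ m' → IsSDR m' A := by
  have hex : ∀ n k : ℕ, A n k * (A (n+2) (k+1) * A (n+1) (k+2)) =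
      A (n+2) (k+2) * (A n (k+1) * A (n+1) k) := by
    intro n k
    have := hA n k 2 0 le_rfl (by omega) (by omega)
    norm_num [Finset.prod_range_succ] at this
    convert this using 3
  have key := fun p r n k hp hr => SDRaux.key hAlt hne hex p r n k hp hr
  constructor
  · intro n k p r h2 _ hr
    exact key p r n k h2 (by omega)
  · intro m' _ n k p r h2 _ hr
    exact key p r n k h2 (by omega)
end

section
/- Let (a_n), (b_n), (c_n) be sequences in a field with b_0 = 1, a_n ≠ 0 and c_n ≠ 0 for all n, let A(n,k) = a_k·b_{n-k}·c_n, and for j ≥ 1 define A_{[j]}(n,k) = det of the j×j matrix with (s,t)-entry A(n+s, k+t) for 0 ≤ s,t ≤ j-1. Then A_{[j]}(n,k) = B_{n-k} · ∏_{i=0}^{j-1} a_{k+i}·c_{n+i}, where B_n = det of the j×j matrix with (s,t)-entry b_{n+s-t}; consequently A_{[j]} is an SDR-matrix of order m for every m ≥ 3. -/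
/-- The sequence `b` extended by zero to negative indices. -/
def bz {F : Type*} [Field F] (b : ℕ → F) (z : ℤ) : F :=
  if 0 ≤ z then b z.toNat else 0

open Finset in
private lemma prod_split1 {F : Type*} [CommRing F] (f : ℕ → F) (n p r : ℕ) (hr : r + 1 ≤ p) :
    (∏ i ∈ range (r+1), f (n+i)) * ∏ i ∈ range (p-r), f (n+p-i)
      = ∏ i ∈ range (p+1), f (n+i) := by
  have h2 : ∏ i ∈ range (p-r), f (n+p-i) = ∏ i ∈ range (p-r), f (n+(r+1+i)) := by
    rw [← Finset.prod_range_reflect]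
    refine Finset.prod_congr rfl fun i hi => ?_
    simp only [Finset.mem_range] at hi
    congr 1
    omega
  rw [h2, ← Finset.prod_range_add (fun i => f (n+i)) (r+1) (p-r),
    show (r+1) + (p-r) = p+1 by omega]

open Finset in
private lemma prod_split2 {F : Type*} [CommRing F] (f : ℕ → F) (n p r : ℕ) (hr : r + 1 ≤ p) :
    (∏ i ∈ range (r+1), f (n+p-i)) * ∏ i ∈ range (p-r), f (n+i)
      = ∏ i ∈ range (p+1), f (n+i) := by
  have h := prod_split1 f n p (p-1-r) (by omega)
  rw [show p-1-r+1 = p-r by omega, show p-(p-1-r) = r+1 by omega] at h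
  rw [mul_comm]
  exact h

open Finset in
private lemma prod_split3 {F : Type*} [CommRing F] (f : ℕ → F) (k p r : ℕ) (hr : r + 1 ≤ p) :
    (∏ i ∈ range (r+1), f (k+r-i)) * ∏ i ∈ range (p-r), f (k+r+i+1)
      = ∏ i ∈ range (p+1), f (k+i) := by
  have h1 : ∏ i ∈ range (r+1), f (k+r-i) = ∏ i ∈ range (r+1), f (k+i) := by
    rw [← Finset.prod_range_reflect]
    refine Finset.prod_congr rfl fun i hi => ?_
    simp only [Finset.mem_range] at hi
    congr 1
    omega
  have h2 : ∏ i ∈ range (p-r), f (k+r+i+1) = ∏ i ∈ range (p-r), f (k+(r+1+i)) := by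
    refine Finset.prod_congr rfl fun i hi => ?_
    congr 1
    omega
  rw [h1, h2, ← Finset.prod_range_add (fun i => f (k+i)) (r+1) (p-r),
    show (r+1) + (p-r) = p+1 by omega]

open Finset in
private lemma prod_split4 {F : Type*} [CommRing F] (f : ℕ → F) (k p r : ℕ) (hr : r + 1 ≤ p) :
    (∏ i ∈ range (r+1), f (k+p-r+i)) * ∏ i ∈ range (p-r), f (k+p-r-i-1)
      = ∏ i ∈ range (p+1), f (k+i) := by
  have h1 : ∏ i ∈ range (r+1), f (k+p-r+i) = ∏ i ∈ range (r+1), f (k+((p-r)+i)) := by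
    refine Finset.prod_congr rfl fun i hi => ?_
    congr 1
    omega
  have h2 : ∏ i ∈ range (p-r), f (k+p-r-i-1) = ∏ i ∈ range (p-r), f (k+i) := by
    rw [← Finset.prod_range_reflect]
    refine Finset.prod_congr rfl fun i hi => ?_
    simp only [Finset.mem_range] at hi
    congr 1
    omega
  rw [h1, h2, mul_comm, ← Finset.prod_range_add (fun i => f (k+i)) (p-r) (r+1),
    show (p-r) + (r+1) = p+1 by omega]

theorem det_transform_isSDR {F : Type*} [Field F]
    (a b c : ℕ → F) (hb0 : b 0 = 1) (ha : ∀ n, a n ≠ 0) (hc : ∀ n, c n ≠ 0)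
    (j : ℕ) (hj : 1 ≤ j)
    (A : ℕ → ℕ → F)
    (hA : ∀ n k, A n k = a k * bz b ((n : ℤ) - k) * c n)
    (Aj : ℕ → ℕ → F)
    (hAj : ∀ n k, Aj n k =
      Matrix.det (fun s t : Fin j => A (n + s) (k + t)))
    (B : ℤ → F)
    (hB : ∀ z, B z = Matrix.det (fun s t : Fin j => bz b (z + (s : ℕ) - (t : ℕ)))) :
    (∀ n k : ℕ, Aj n k =
        B ((n : ℤ) - k) * ∏ i ∈ Finset.range j, a (k+i) * c (n+i)) ∧
      ∀ m, 3 ≤ m → IsSDR m Aj := by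
  classical
  have key : ∀ n k : ℕ, Aj n k =
      B ((n : ℤ) - k) * ((∏ i ∈ Finset.range j, a (k+i)) * ∏ i ∈ Finset.range j, c (n+i)) := by
    intro n k
    rw [hAj, hB]
    have hmat : (fun s t : Fin j => A (n + s) (k + t))
        = Matrix.of (fun s t : Fin j => c (n + s) *
            (Matrix.of (fun s t : Fin j => a (k + t) *
              bz b (((n : ℤ) - k) + (s : ℕ) - (t : ℕ))) s t)) := by
      funext s t
      simp only [Matrix.of_apply]
      rw [hA]
      have harg : ((n + (s:ℕ) : ℕ) : ℤ) - ((k + (t:ℕ) : ℕ) : ℤ)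
          = ((n : ℤ) - k) + (s : ℕ) - (t : ℕ) := by push_cast; ring
      rw [harg]; ring
    rw [hmat, Matrix.det_mul_column]
    erw [Matrix.det_mul_row (fun t : Fin j => a (k + t))
        ((fun s t : Fin j => bz b (((n : ℤ) - k) + (s : ℕ) - (t : ℕ))) : Matrix (Fin j) (Fin j) F)]
    rw [
      Fin.prod_univ_eq_prod_range (fun i => c (n + i)),
      Fin.prod_univ_eq_prod_range (fun i => a (k + i))]
    ring
  constructor
  · intro n k
    rw [key, Finset.prod_mul_distrib]
  · intro m hm
    intro n k p r hp2 hpm hr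
    have hrp : r + 1 ≤ p := by omega
    simp only [key]
    simp only [Finset.prod_mul_distrib]
    -- B parts
    have hB1 : (∏ i ∈ Finset.range (r+1), B (((n+i : ℕ) : ℤ) - ((k+r-i : ℕ) : ℤ)))
        = ∏ i ∈ Finset.range (r+1), B (((n+p-i : ℕ) : ℤ) - ((k+p-r+i : ℕ) : ℤ)) := by
      conv_rhs => rw [← Finset.prod_range_reflect]
      refine Finset.prod_congr rfl fun i hi => ?_
      simp only [Finset.mem_range] at hi
      congr 1
      omega
    have hB2 : (∏ i ∈ Finset.range (p-r), B (((n+p-i : ℕ) : ℤ) - ((k+r+i+1 : ℕ) : ℤ)))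
        = ∏ i ∈ Finset.range (p-r), B (((n+i : ℕ) : ℤ) - ((k+p-r-i-1 : ℕ) : ℤ)) := by
      conv_rhs => rw [← Finset.prod_range_reflect]
      refine Finset.prod_congr rfl fun i hi => ?_
      simp only [Finset.mem_range] at hi
      congr 1
      omega
    -- a parts
    set G : ℕ → F := fun x => ∏ i ∈ Finset.range j, a (x + i) with hG
    set C : ℕ → F := fun x => ∏ i ∈ Finset.range j, c (x + i) with hC
    have hGeq : (∏ i ∈ Finset.range (r+1), G (k+r-i)) * ∏ i ∈ Finset.range (p-r), G (k+r+i+1)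
        = (∏ i ∈ Finset.range (r+1), G (k+p-r+i)) * ∏ i ∈ Finset.range (p-r), G (k+p-r-i-1) := by
      rw [prod_split3 G k p r hrp, prod_split4 G k p r hrp]
    have hCeq : (∏ i ∈ Finset.range (r+1), C (n+i)) * ∏ i ∈ Finset.range (p-r), C (n+p-i)
        = (∏ i ∈ Finset.range (r+1), C (n+p-i)) * ∏ i ∈ Finset.range (p-r), C (n+i) := by
      rw [prod_split1 C n p r hrp, prod_split2 C n p r hrp]
    calc ((∏ i ∈ Finset.range (r+1), B (((n+i : ℕ) : ℤ) - ((k+r-i : ℕ) : ℤ))) *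
            ((∏ i ∈ Finset.range (r+1), G (k+r-i)) * ∏ i ∈ Finset.range (r+1), C (n+i))) *
          ((∏ i ∈ Finset.range (p-r), B (((n+p-i : ℕ) : ℤ) - ((k+r+i+1 : ℕ) : ℤ))) *
            ((∏ i ∈ Finset.range (p-r), G (k+r+i+1)) * ∏ i ∈ Finset.range (p-r), C (n+p-i)))
        = ((∏ i ∈ Finset.range (r+1), B (((n+i : ℕ) : ℤ) - ((k+r-i : ℕ) : ℤ))) *
            (∏ i ∈ Finset.range (p-r), B (((n+p-i : ℕ) : ℤ) - ((k+r+i+1 : ℕ) : ℤ)))) *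
          (((∏ i ∈ Finset.range (r+1), G (k+r-i)) * ∏ i ∈ Finset.range (p-r), G (k+r+i+1)) *
           ((∏ i ∈ Finset.range (r+1), C (n+i)) * ∏ i ∈ Finset.range (p-r), C (n+p-i))) := by
          ring
      _ = ((∏ i ∈ Finset.range (r+1), B (((n+p-i : ℕ) : ℤ) - ((k+p-r+i : ℕ) : ℤ))) *
            (∏ i ∈ Finset.range (p-r), B (((n+i : ℕ) : ℤ) - ((k+p-r-i-1 : ℕ) : ℤ)))) *
          (((∏ i ∈ Finset.range (r+1), G (k+p-r+i)) * ∏ i ∈ Finset.range (p-r), G (k+p-r-i-1)) *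
           ((∏ i ∈ Finset.range (r+1), C (n+p-i)) * ∏ i ∈ Finset.range (p-r), C (n+i))) := by
          rw [hB1, hB2, hGeq, hCeq]
      _ = _ := by ring
end
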